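/- Let C be a clique in a static graph G and C' ⊆ C a maximal avg-c-isolated subset (C' is avg-c-isolated and no proper superset of C' within C is avg-c-isolated). Let C̃ ⊆ C be the ⌊δ(C) − c + 2⌋ vertices of smallest degree in G among C. Then C̃ ⊆ C'. -/

import Mathlib

open Finset
open scoped Classical

variable {V : Type*} [Fintype V] [DecidableEq V]

/-- Number of neighbors of `v` in `G` lying outside `A`. -/
noncomputable def outdeg (G : SimpleGraph V) (v : V) (A : Finset V) : ℕ :=
  (Finset.univ.filter fun u => G.Adj v u ∧ u ∉ A).card

/-- Degree of `v` in `G`. -/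
noncomputable def deg (G : SimpleGraph V) (v : V) : ℕ :=
  (Finset.univ.filter fun u => G.Adj v u).card

/-- Minimum degree over the vertices of a nonempty set `C`. -/
noncomputable def minDeg (G : SimpleGraph V) (C : Finset V) (hC : C.Nonempty) : ℕ :=
  C.inf' hC fun v => deg G v

/-- Edge-wise intersection of the layers `G a, …, G b`. -/
def interGraph (G : ℕ → SimpleGraph V) (a b : ℕ) : SimpleGraph V where
  Adj u v := u ≠ v ∧ ∀ i ∈ Finset.Icc a b, (G i).Adj u v
  symm := ⟨fun u v h => ⟨h.1.symm, fun i hi => (h.2 i hi).symm⟩⟩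
  loopless := ⟨fun v h => h.1 rfl⟩

/-- Edge-wise union of the layers `G a, …, G b`. -/
def unionGraph (G : ℕ → SimpleGraph V) (a b : ℕ) : SimpleGraph V where
  Adj u v := ∃ i ∈ Finset.Icc a b, (G i).Adj u v
  symm := ⟨fun u v h => ⟨h.choose, h.choose_spec.1, h.choose_spec.2.symm⟩⟩
  loopless := ⟨fun v h => (G h.choose).loopless.irrefl v h.choose_spec.2⟩
/-- `S` is avg-`c`-isolated in `G`. -/
def AvgIsolated (G : SimpleGraph V) (c : ℚ) (S : Finset V) : Prop :=
  (∑ v ∈ S, (outdeg G v S : ℚ)) < c * S.card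

theorem stmt4 (G : SimpleGraph V) (c : ℚ) (hc : 0 < c)
    (C C' Ct : Finset V) (hC : C.Nonempty)
    (hclique : G.IsClique (C : Set V)) (hsub : C' ⊆ C)
    (hiso : AvgIsolated G c C')
    (hmax : ∀ C'' : Finset V, C' ⊂ C'' → C'' ⊆ C → ¬ AvgIsolated G c C'')
    (hCtsub : Ct ⊆ C)
    (hCtcard : (Ct.card : ℤ) = ⌊(minDeg G C hC : ℚ) - c + 2⌋)
    (hCtmin : ∀ u ∈ Ct, ∀ v ∈ C \ Ct, deg G u ≤ deg G v) :
    Ct ⊆ C' := by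

  intro v hvCt
  by_contra hvC'
  have hvC : v ∈ C := hCtsub hvCt
  have hC''sub : insert v C' ⊆ C := Finset.insert_subset hvC hsub
  have hssub : C' ⊂ insert v C' := Finset.ssubset_insert hvC'
  have hniso : ¬ AvgIsolated G c (insert v C') := hmax _ hssub hC''sub
  -- v is adjacent to everything in C'
  have hadj : ∀ u ∈ C', G.Adj u v := fun u hu =>
    hclique (hsub hu) hvC (fun h => hvC' (h ▸ hu))
  -- C' is nonempty
  have hs1 : 1 ≤ C'.card := by
    rcases Nat.eq_zero_or_pos C'.card with h | h
    · exfalso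
      have he : C' = ∅ := Finset.card_eq_zero.mp h
      rw [AvgIsolated, he] at hiso
      simp at hiso
    · exact h
  -- Lemma A : for u ∈ C', outdeg u C' = outdeg u (insert v C') + 1
  have lemA : ∀ u ∈ C', outdeg G u C' = outdeg G u (insert v C') + 1 := by
    intro u hu
    have hset : (Finset.univ.filter fun w => G.Adj u w ∧ w ∉ C')
        = insert v (Finset.univ.filter fun w => G.Adj u w ∧ w ∉ insert v C') := by
      ext w
      simp only [Finset.mem_filter, Finset.mem_univ, true_and, Finset.mem_insert]
      constructor
      · rintro ⟨haw, hw⟩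
        by_cases hwv : w = v
        · exact Or.inl hwv
        · exact Or.inr ⟨haw, fun h => h.elim hwv hw⟩
      · rintro (rfl | ⟨haw, hw⟩)
        · exact ⟨hadj u hu, hvC'⟩
        · exact ⟨haw, fun h => hw (Or.inr h)⟩
    have hvnot : v ∉ (Finset.univ.filter fun w => G.Adj u w ∧ w ∉ insert v C') := by
      simp
    rw [outdeg, outdeg, hset, Finset.card_insert_of_notMem hvnot]
  -- Lemma B : deg v = outdeg v (insert v C') + C'.card
  have lemB : deg G v = outdeg G v (insert v C') + C'.card := by
    have hset : (Finset.univ.filter fun w => G.Adj v w)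
        = (Finset.univ.filter fun w => G.Adj v w ∧ w ∉ insert v C') ∪ C' := by
      ext w
      simp only [Finset.mem_filter, Finset.mem_univ, true_and, Finset.mem_union,
        Finset.mem_insert]
      constructor
      · intro haw
        by_cases hw : w ∈ C'
        · exact Or.inr hw
        · refine Or.inl ⟨haw, ?_⟩
          rintro (rfl | h)
          · exact G.loopless.irrefl _ haw
          · exact hw h
      · rintro (⟨haw, _⟩ | hw)
        · exact haw
        · exact (hadj w hw).symm
    have hdisj : Disjoint (Finset.univ.filter fun w => G.Adj v w ∧ w ∉ insert v C') C' := by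
      rw [Finset.disjoint_left]
      intro w hw hw'
      exact (Finset.mem_filter.mp hw).2.2 (Finset.mem_insert_of_mem hw')
    rw [deg, outdeg, hset, Finset.card_union_of_disjoint hdisj]
  -- Lemma C : for u ∈ C', deg u ≤ outdeg u C' + (C'.card - 1)
  have lemC : ∀ u ∈ C', deg G u ≤ outdeg G u C' + (C'.card - 1) := by
    intro u hu
    have hsubset : (Finset.univ.filter fun w => G.Adj u w)
        ⊆ (Finset.univ.filter fun w => G.Adj u w ∧ w ∉ C') ∪ C'.erase u := by
      intro w hw
      have haw : G.Adj u w := (Finset.mem_filter.mp hw).2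
      by_cases hwC : w ∈ C'
      · exact Finset.mem_union_right _ (Finset.mem_erase.mpr ⟨fun h => G.loopless.irrefl u (h ▸ haw), hwC⟩)
      · exact Finset.mem_union_left _ (Finset.mem_filter.mpr ⟨Finset.mem_univ w, haw, hwC⟩)
    calc deg G u ≤ ((Finset.univ.filter fun w => G.Adj u w ∧ w ∉ C') ∪ C'.erase u).card :=
          Finset.card_le_card hsubset
      _ ≤ outdeg G u C' + (C'.erase u).card := Finset.card_union_le _ _
      _ = outdeg G u C' + (C'.card - 1) := by rw [Finset.card_erase_of_mem hu]
  -- notation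
  set s : ℚ := (C'.card : ℚ) with hs
  set S : ℚ := ∑ u ∈ C', (outdeg G u C' : ℚ) with hS
  have hs0 : (1 : ℚ) ≤ s := by rw [hs]; exact_mod_cast hs1
  have h1 : S < c * s := hiso
  -- sum over insert v C'
  have hcard'' : ((insert v C').card : ℚ) = s + 1 := by
    rw [Finset.card_insert_of_notMem hvC']; push_cast; ring
  have h2 : ((deg G v : ℚ) - s) + (S - s) ≥ c * (s + 1) := by
    have hsum : (∑ u ∈ insert v C', (outdeg G u (insert v C') : ℚ))
        = ((deg G v : ℚ) - s) + (S - s) := by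
      rw [Finset.sum_insert hvC']
      have e1 : (outdeg G v (insert v C') : ℚ) = (deg G v : ℚ) - s := by
        rw [lemB]; push_cast; ring
      have e2 : (∑ u ∈ C', (outdeg G u (insert v C') : ℚ)) = S - s := by
        have : ∀ u ∈ C', (outdeg G u (insert v C') : ℚ) = (outdeg G u C' : ℚ) - 1 := by
          intro u hu; rw [lemA u hu]; push_cast; ring
        rw [Finset.sum_congr rfl this, Finset.sum_sub_distrib]
        simp [hS, hs]
      rw [e1, e2]
    have := hniso
    rw [AvgIsolated, hsum, hcard''] at this
    linarith [not_lt.mp this]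
  have hdegv : (deg G v : ℚ) > c + 2 * s := by linarith
  -- degree sum bound
  have h3 : (∑ u ∈ C', (deg G u : ℚ)) ≤ S + s * (s - 1) := by
    have : ∀ u ∈ C', (deg G u : ℚ) ≤ (outdeg G u C' : ℚ) + (s - 1) := by
      intro u hu
      have := lemC u hu
      have hcast : ((C'.card - 1 : ℕ) : ℚ) = s - 1 := by
        rw [Nat.cast_sub hs1]; simp [hs]
      calc (deg G u : ℚ) ≤ ((outdeg G u C' + (C'.card - 1) : ℕ) : ℚ) := by exact_mod_cast this
        _ = (outdeg G u C' : ℚ) + (s - 1) := by push_cast [Nat.cast_sub hs1]; simp [hs]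
    calc (∑ u ∈ C', (deg G u : ℚ)) ≤ ∑ u ∈ C', ((outdeg G u C' : ℚ) + (s - 1)) :=
        Finset.sum_le_sum this
      _ = S + s * (s - 1) := by rw [Finset.sum_add_distrib]; simp [hS, hs, mul_comm]; ring
  -- split the degree sum
  set t : ℚ := ((C' ∩ Ct).card : ℚ) with ht
  have hsplit : (∑ u ∈ C' ∩ Ct, (deg G u : ℚ)) + (∑ u ∈ C' \ Ct, (deg G u : ℚ))
      = ∑ u ∈ C', (deg G u : ℚ) := Finset.sum_inter_add_sum_sdiff _ _ _
  set d : ℚ := (minDeg G C hC : ℚ) with hd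
  have hbound1 : (∑ u ∈ C' ∩ Ct, (deg G u : ℚ)) ≥ t * d := by
    have : ∀ u ∈ C' ∩ Ct, d ≤ (deg G u : ℚ) := by
      intro u hu
      rw [hd]
      exact_mod_cast Finset.inf'_le _ (hsub (Finset.mem_inter.mp hu).1)
    have h' := Finset.card_nsmul_le_sum (C' ∩ Ct) _ d this
    rw [nsmul_eq_mul, ← ht] at h'
    exact h'
  have hcardsdiff : ((C' \ Ct).card : ℚ) = s - t := by
    have : (C' \ Ct).card + (C' ∩ Ct).card = C'.card := Finset.card_sdiff_add_card_inter _ _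
    have := congrArg (fun n : ℕ => (n : ℚ)) this
    push_cast at this
    linarith [this]
  have hbound2 : (∑ u ∈ C' \ Ct, (deg G u : ℚ)) ≥ (s - t) * (deg G v : ℚ) := by
    have : ∀ u ∈ C' \ Ct, (deg G v : ℚ) ≤ (deg G u : ℚ) := by
      intro u hu
      have h' : u ∈ C \ Ct := by
        rcases Finset.mem_sdiff.mp hu with ⟨h1, h2⟩
        exact Finset.mem_sdiff.mpr ⟨hsub h1, h2⟩
      exact_mod_cast hCtmin v hvCt u h'
    have h' := Finset.card_nsmul_le_sum (C' \ Ct) _ ((deg G v : ℚ)) this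
    rw [nsmul_eq_mul, hcardsdiff] at h'
    exact h'
  -- bounds on t, s, d
  have hts : t ≤ s := by
    rw [ht, hs]
    exact_mod_cast Finset.card_le_card (Finset.inter_subset_left (s₁ := C') (s₂ := Ct))
  have ht0 : (0 : ℚ) ≤ t := by rw [ht]; positivity
  have htm : t ≤ (Ct.card : ℚ) - 1 := by
    have hsub' : C' ∩ Ct ⊆ Ct.erase v := by
      intro u hu
      rcases Finset.mem_inter.mp hu with ⟨h1, h2⟩
      exact Finset.mem_erase.mpr ⟨fun h => hvC' (h ▸ h1), h2⟩
    have hle := Finset.card_le_card hsub'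
    rw [Finset.card_erase_of_mem hvCt] at hle
    have hm1 : 1 ≤ Ct.card := Finset.card_pos.mpr ⟨v, hvCt⟩
    have h2' : ((C' ∩ Ct).card : ℚ) ≤ ((Ct.card - 1 : ℕ) : ℚ) := by exact_mod_cast hle
    rw [ht]
    rwa [Nat.cast_sub hm1, Nat.cast_one] at h2'
  have hmd : (Ct.card : ℚ) ≤ d - c + 2 := by
    have hfl : ((Ct.card : ℤ) : ℚ) ≤ d - c + 2 := by
      rw [hCtcard]; exact Int.floor_le _
    exact_mod_cast hfl
  have hdt : d ≥ t + c - 1 := by linarith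
  -- final contradiction
  have hfin : (∑ u ∈ C', (deg G u : ℚ)) ≥ t * d + (s - t) * (deg G v : ℚ) := by
    linarith
  nlinarith [mul_nonneg (sub_nonneg.mpr hts) (le_of_lt (sub_pos.mpr hdegv)),
    mul_nonneg ht0 (sub_nonneg.mpr hdt), sq_nonneg (s - t)]
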